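/- Let m ≥ 1 and let a, b be natural numbers with a < 2^m and b < 2^m. Then b = (a + 1) mod 2^m if and only if for every i < m the following holds: bit i of a equals bit i of b exactly when there exists j < i such that bit j of a is 0 (bits are indexed starting from the least significant bit, e.g. via Nat.testBit). -/

import Mathlib

lemma ex_zero_bit_iff (a i : ℕ) :
    (∃ j < i, a.testBit j = false) ↔ a % 2 ^ i ≠ 2 ^ i - 1 := by
  constructor
  · rintro ⟨j, hj, hja⟩ h
    have := Nat.testBit_mod_two_pow a i j
    rw [h, Nat.testBit_two_pow_sub_one] at this
    simp [hj, hja] at this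
  · intro h
    by_contra hc
    push_neg at hc
    apply h
    apply Nat.eq_of_testBit_eq
    intro j
    rw [Nat.testBit_mod_two_pow, Nat.testBit_two_pow_sub_one]
    by_cases hj : j < i
    · simp [hj]
      have := hc j hj
      revert this
      cases a.testBit j <;> simp
    · simp [hj]

lemma succ_testBit_eq_iff (a i : ℕ) :
    ((a + 1).testBit i = a.testBit i) ↔ a % 2 ^ i ≠ 2 ^ i - 1 := by
  have hpos : 0 < 2 ^ i := Nat.pow_pos (n := i) (by norm_num)
  by_cases h : a % 2 ^ i = 2 ^ i - 1
  · have hdiv : (a + 1) / 2 ^ i = a / 2 ^ i + 1 := by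
      conv_lhs => rw [← Nat.div_add_mod a (2 ^ i)]
      rw [h, Nat.add_assoc, Nat.sub_add_cancel hpos, Nat.mul_add_div hpos]
      simp [Nat.div_self hpos]
    simp only [Nat.testBit_eq_decide_div_mod_eq, hdiv, h]
    constructor
    · intro he
      exfalso
      rcases Nat.mod_two_eq_zero_or_one (a / 2 ^ i) with h2 | h2 <;>
        simp [Nat.add_mod, h2] at he
    · intro he; exact absurd rfl he
  · have hlt : a % 2 ^ i + 1 < 2 ^ i := by
      have := Nat.mod_lt a hpos
      omega
    have hdiv : (a + 1) / 2 ^ i = a / 2 ^ i := by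
      conv_lhs => rw [← Nat.div_add_mod a (2 ^ i)]
      rw [Nat.add_assoc, Nat.mul_add_div hpos, Nat.div_eq_of_lt hlt, Nat.add_zero]
    simp [Nat.testBit_eq_decide_div_mod_eq, hdiv, h]

/-- The fact (count) used in the lower-bound construction: for `m ≥ 1` and
`m`-bit counter values `a, b < 2^m`, `b` is the successor of `a` modulo `2^m`
iff for every bit position `i < m`, bit `i` of `a` equals bit `i` of `b`
exactly when some strictly less significant bit of `a` is `0`. -/
theorem succ_mod_pow_iff_bits (m a b : ℕ) (hm : 1 ≤ m)
    (ha : a < 2 ^ m) (hb : b < 2 ^ m) :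
    b = (a + 1) % 2 ^ m ↔
      ∀ i < m, (a.testBit i = b.testBit i ↔ ∃ j < i, a.testBit j = false) := by
  have key : ∀ i < m, (a.testBit i = ((a + 1) % 2 ^ m).testBit i ↔
      ∃ j < i, a.testBit j = false) := by
    intro i hi
    rw [Nat.testBit_mod_two_pow]
    have hd : decide (i < m) = true := by simp [hi]
    rw [hd, Bool.true_and, ex_zero_bit_iff, ← succ_testBit_eq_iff, eq_comm]
  constructor
  · intro h; subst h; exact key
  · intro h
    apply Nat.eq_of_testBit_eq
    intro i
    by_cases hi : i < m
    · have h1 := h i hi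
      have h2 := key i hi
      rw [← h2] at h1
      revert h1
      cases a.testBit i <;> cases b.testBit i <;>
        cases ((a + 1) % 2 ^ m).testBit i <;> simp
    · push_neg at hi
      rw [Nat.testBit_lt_two_pow (lt_of_lt_of_le hb (Nat.pow_le_pow_right (by norm_num) hi)),
        Nat.testBit_lt_two_pow]
      exact lt_of_lt_of_le (Nat.mod_lt _ (Nat.pow_pos (n := m) (by norm_num)))
        (Nat.pow_le_pow_right (by norm_num) hi)
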